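/- Let η be a quasi-Kähler torsion-type tensor on (V,J) satisfying the almost Kähler condition, and let S be an ∇̄η-type tensor on (V,J) such that in addition, for every fixed x ∈ V, the bilinear map (y,z) ↦ S(x,y)z satisfies the almost Kähler condition (⟨S(x,y)z − S(x,z)y, u⟩ = −⟨S(x,u)y, z⟩ for all y,z,u), and such that S satisfies the symmetry condition (3.1): ⟨S(x,y)z − S(y,x)z + η_{T_x y} z, u⟩ = ⟨S(z,u)x − S(u,z)x + η_{T_z u} x, y⟩ for all x,y,z,u ∈ V. Then the cyclic sum σ_{x,y,z}[S(x,y)z − S(x,z)y] = 0; consequently, any trilinear map R̄ : V×V×V → V satisfying the first Bianchi identity with torsion, σ_{x,y,z} R̄(x,y)z = −σ_{x,y,z}[(S(x,y)z − S(x,z)y) + T_{T_x y} z], satisfies σ_{x,y,z}[R̄(x,y)z + T_{T_x y} z] = 0. (This is the algebraic form of Lemma 3.2, with S = ∇̄T's building tensor ∇̄η and R̄ the Hermitian curvature with the sign convention R̄(X,Y) = −[∇̄_X,∇̄_Y] + ∇̄_{[X,Y]}.) -/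
import Mathlib


open scoped InnerProductSpace

/-- Algebraic form of Lemma 3.2. Under the stated conditions on η and S,
the cyclic sum `σ_{x,y,z} [S x y z - S x z y]` vanishes; consequently any trilinear R̄
with `σ R̄(x,y)z = -σ[(S x y z - S x z y) + T (T x y) z]` satisfies the simplified
first Bianchi identity `σ [R̄(x,y)z + T (T x y) z] = 0`. -/
theorem simplified_first_bianchi
    {V : Type*} [NormedAddCommGroup V] [InnerProductSpace ℝ V] [FiniteDimensional ℝ V]
    (J : V →ₗ[ℝ] V)
    (hJiso : ∀ x y : V, ⟪J x, J y⟫_ℝ = ⟪x, y⟫_ℝ)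
    (hJJ : ∀ x : V, J (J x) = -x)
    (η : V →ₗ[ℝ] V →ₗ[ℝ] V)
    (hskew : ∀ x y z : V, ⟪η x y, z⟫_ℝ = -⟪y, η x z⟫_ℝ)
    (hanti : ∀ x y : V, η x (J y) = -J (η x y))
    (hQK : ∀ x y : V, η (J x) (J y) = -η x y)
    (T : V → V → V) (hT : ∀ x y : V, T x y = η x y - η y x)
    (hAK : ∀ x y z : V, ⟪T x y, z⟫_ℝ = -⟪η z x, y⟫_ℝ)
    (S : V →ₗ[ℝ] V →ₗ[ℝ] V →ₗ[ℝ] V)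
    (hSskew : ∀ x y z u : V, ⟪S x y z, u⟫_ℝ = -⟪z, S x y u⟫_ℝ)
    (hSanti : ∀ x y z : V, S x y (J z) = -J (S x y z))
    (hSQK : ∀ x y z : V, S x (J y) (J z) = -S x y z)
    (hSAK : ∀ x y z u : V, ⟪S x y z - S x z y, u⟫_ℝ = -⟪S x u y, z⟫_ℝ)
    (hsym : ∀ x y z u : V,
      ⟪S x y z - S y x z + η (T x y) z, u⟫_ℝ =
        ⟪S z u x - S u z x + η (T z u) x, y⟫_ℝ) :
    (∀ x y z : V,
      (S x y z - S x z y) + (S y z x - S y x z) + (S z x y - S z y x) = 0) ∧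
    (∀ Rbar : V →ₗ[ℝ] V →ₗ[ℝ] V →ₗ[ℝ] V,
      (∀ x y z : V,
        Rbar x y z + Rbar y z x + Rbar z x y =
          -(((S x y z - S x z y) + T (T x y) z) +
            ((S y z x - S y x z) + T (T y z) x) +
            ((S z x y - S z y x) + T (T z x) y))) →
      ∀ x y z : V,
        (Rbar x y z + T (T x y) z) + (Rbar y z x + T (T y z) x) +
          (Rbar z x y + T (T z x) y) = 0) := by
  have hskewF : ∀ a b c d : V, ⟪S a b c, d⟫_ℝ = -⟪S a b d, c⟫_ℝ := by
    intro a b c d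
    rw [hSskew, real_inner_comm]
  have hcyc : ∀ a b c d : V,
      ⟪S a b c, d⟫_ℝ + ⟪S a c d, b⟫_ℝ + ⟪S a d b, c⟫_ℝ = 0 := by
    intro a b c d
    have h1 := hSAK a b c d
    rw [inner_sub_left] at h1
    have h2 := hskewF a c b d
    linarith
  have hB : ∀ a b c d : V, ⟪η (T a b) c, d⟫_ℝ = -⟪T c d, T a b⟫_ℝ := by
    intro a b c d
    have := hAK c d (T a b)
    linarith
  have hsym' : ∀ a b c d : V,
      ⟪S a b c, d⟫_ℝ - ⟪S b a c, d⟫_ℝ - ⟪T c d, T a b⟫_ℝ =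
        ⟪S c d a, b⟫_ℝ - ⟪S d c a, b⟫_ℝ - ⟪T a b, T c d⟫_ℝ := by
    intro a b c d
    have h := hsym a b c d
    rw [inner_add_left, inner_add_left, inner_sub_left, inner_sub_left, hB, hB] at h
    linarith
  have main : ∀ x y z : V,
      (S x y z - S x z y) + (S y z x - S y x z) + (S z x y - S z y x) = 0 := by
    intro x y z
    have key : ∀ u : V,
        ⟪(S x y z - S x z y) + (S y z x - S y x z) + (S z x y - S z y x), u⟫_ℝ = 0 := by
      intro u
      have e1 := hSAK x y z u
      have e2 := hSAK y z x u
      have e3 := hSAK z x y u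
      have c1 := hcyc x u y z
      have c2 := hcyc y u z x
      have c3 := hcyc z u x y
      have c4 := hcyc u z x y
      have s1 := hsym' x y z u
      have s2 := hsym' y z x u
      have s3 := hsym' z x y u
      have k1 := hskewF y x z u
      have k2 := hskewF z y x u
      have k3 := hskewF x z y u
      have m1 : ⟪T z u, T x y⟫_ℝ = ⟪T x y, T z u⟫_ℝ := real_inner_comm _ _
      have m2 : ⟪T x u, T y z⟫_ℝ = ⟪T y z, T x u⟫_ℝ := real_inner_comm _ _
      have m3 : ⟪T y u, T z x⟫_ℝ = ⟪T z x, T y u⟫_ℝ := real_inner_comm _ _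
      rw [inner_add_left, inner_add_left]
      linarith
    exact inner_self_eq_zero.mp
      (key ((S x y z - S x z y) + (S y z x - S y x z) + (S z x y - S z y x)))
  refine ⟨main, ?_⟩
  intro Rbar hR x y z
  have h1 := main x y z
  have h2 := hR x y z
  calc (Rbar x y z + T (T x y) z) + (Rbar y z x + T (T y z) x) + (Rbar z x y + T (T z x) y)
      = (Rbar x y z + Rbar y z x + Rbar z x y)
        + (T (T x y) z + T (T y z) x + T (T z x) y) := by abel
    _ = -(((S x y z - S x z y) + T (T x y) z) + ((S y z x - S y x z) + T (T y z) x)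
          + ((S z x y - S z y x) + T (T z x) y))
        + (T (T x y) z + T (T y z) x + T (T z x) y) := by rw [h2]
    _ = -((S x y z - S x z y) + (S y z x - S y x z) + (S z x y - S z y x)) := by abel
    _ = 0 := by rw [h1, neg_zero]
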